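/- arXiv:1407.3878 — 4 statements merged into one kernel-verified Lean document; each statement's English description precedes it below -/
import Mathlib

section
/- Let A be a unital C*-algebra and let T : A → A be a (not necessarily linear or continuous) 2-local triple derivation with T(1) = 0. Then T(x)* = T(x) for every self-adjoint element x ∈ A. -/
noncomputable section

/-- The C*-triple product `{a,b,c} = (a b* c + c b* a)/2`. -/
def triple {A : Type*} [NonUnitalRing A] [StarRing A] [Module ℂ A] (a b c : A) : A :=
  (2 : ℂ)⁻¹ • (a * star b * c + c * star b * a)

/-- A (complex-linear) triple derivation on `A`:
`δ{a,b,c} = {δ(a),b,c} + {a,δ(b),c} + {a,b,δ(c)}`. -/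
def IsTripleDerivation {A : Type*} [NonUnitalRing A] [StarRing A] [Module ℂ A]
    (δ : A →ₗ[ℂ] A) : Prop :=
  ∀ a b c : A, δ (triple a b c) = triple (δ a) b c + triple a (δ b) c + triple a b (δ c)

/-- A 2-local triple derivation on `A`: a map (not assumed linear or continuous) that agrees
with some triple derivation at each pair of points. -/
def Is2LocalTripleDerivation {A : Type*} [NonUnitalRing A] [StarRing A] [Module ℂ A]
    (T : A → A) : Prop :=
  ∀ a b : A, ∃ S : A →ₗ[ℂ] A, IsTripleDerivation S ∧ T a = S a ∧ T b = S b

variable {A : Type*} [NormedRing A] [StarRing A] [CStarRing A] [NormedAlgebra ℂ A]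
  [StarModule ℂ A] [CompleteSpace A]

private lemma halfSmulAddSelf (y : A) : (2 : ℂ)⁻¹ • (y + y) = y := by
  rw [← two_smul ℂ y, smul_smul, inv_mul_cancel₀ two_ne_zero, one_smul]

/-- If `T` is a 2-local triple derivation on a unital C*-algebra `A` with
`T(1) = 0`, then `T(x)* = T(x)` for every self-adjoint `x ∈ A`. -/
theorem twoLocalTripleDerivation_map_selfAdjoint (T : A → A)
    (hT : Is2LocalTripleDerivation T) (hT1 : T 1 = 0) :
    ∀ x : A, IsSelfAdjoint x → star (T x) = T x := by
  intro x hx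
  obtain ⟨S, hS, h1, hx'⟩ := hT 1 x
  have hS1 : S 1 = 0 := by rw [← h1, hT1]
  have key := hS 1 x 1
  rw [hS1] at key
  have e1 : triple (1 : A) x 1 = x := by
    simp only [triple, one_mul, mul_one, hx.star_eq, halfSmulAddSelf]
  have e2 : triple (0 : A) x 1 = 0 := by simp [triple]
  have e3 : triple (1 : A) x 0 = 0 := by simp [triple]
  have e4 : triple (1 : A) (S x) 1 = star (S x) := by
    simp only [triple, one_mul, mul_one, halfSmulAddSelf]
  rw [e1, e2, e3, e4, zero_add, add_zero] at key
  rw [hx', ← key]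
end
end

section
/- Let M be a von Neumann algebra acting on a complex Hilbert space H, let u ∈ M be a positive element with trivial kernel (so u has full support), and let c ∈ M be self-adjoint. If the spectrum of c²u contains no strictly positive real number, then c = 0. -/
noncomputable section

/-- Scalar multiplication by complex numbers preserves membership in a von Neumann algebra. -/
instance VonNeumannAlgebra.instSMulMemClass {H : Type*} [NormedAddCommGroup H]
    [InnerProductSpace ℂ H] [CompleteSpace H] :
    SMulMemClass (VonNeumannAlgebra H) ℂ (H →L[ℂ] H) where
  smul_mem {s} c x hx := s.toStarSubalgebra.smul_mem hx c

variable {H : Type*} [NormedAddCommGroup H] [InnerProductSpace ℂ H] [CompleteSpace H]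

/-- Let `M` be a von Neumann algebra on `H`, let `u ∈ M` be positive with
trivial kernel, and let `c ∈ M` be self-adjoint. If the spectrum of `c²u` (in `B(H)`) contains
no strictly positive real number, then `c = 0`. -/
theorem eq_zero_of_spectrum_sq_mul_nonpos (M : VonNeumannAlgebra H)
    (u c : H →L[ℂ] H) (huM : u ∈ M) (hcM : c ∈ M)
    (hu_pos : u.IsPositive) (hu_ker : LinearMap.ker (u : H →ₗ[ℂ] H) = ⊥)
    (hc : IsSelfAdjoint c)
    (hspec : ∀ r : ℝ, 0 < r → (r : ℂ) ∉ spectrum ℂ (c ^ 2 * u)) :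
    c = 0 := by
  -- `p = c u c` is positive
  set p : H →L[ℂ] H := c * u * c with hp_def
  have hc_adj : ContinuousLinearMap.adjoint c = c := hc
  have hp_pos : p.IsPositive := by
    have := hu_pos.adjoint_conj c
    rwa [hc_adj] at this
  have hp_nonneg : (0 : H →L[ℂ] H) ≤ p :=
    (ContinuousLinearMap.nonneg_iff_isPositive p).mpr hp_pos
  have hp_sa : IsSelfAdjoint p := hp_pos.isSelfAdjoint
  -- the spectrum of `p` is `{0}` at most
  have hspec_p : spectrum ℂ p ⊆ {0} := by
    intro z hz
    by_contra hz0
    have hz' : z ∈ spectrum ℂ ((c * u) * c) \ {0} :=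
      Set.mem_diff_of_mem hz hz0
    rw [spectrum.nonzero_mul_comm] at hz'
    have hz'' : z ∈ spectrum ℂ (c ^ 2 * u) := by
      have h : c * (c * u) = c ^ 2 * u := by rw [sq, mul_assoc]
      rw [h] at hz'
      exact hz'.1
    have hzre : z = (z.re : ℂ) := hp_sa.mem_spectrum_eq_re hz
    have hre_mem : (z.re : ℂ) ∈ spectrum ℂ p := hzre ▸ hz
    have hre_nonneg : 0 ≤ z.re :=
      spectrum_nonneg_of_nonneg hp_nonneg
        (spectrum.of_algebraMap_mem ℂ (by simpa using hre_mem))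
    have hre_pos : 0 < z.re := by
      rcases hre_nonneg.lt_or_eq with h | h
      · exact h
      · exact absurd (by rw [hzre, ← h]; simp) hz0
    exact hspec z.re hre_pos (hzre ▸ hz'')
  -- hence `p = 0`
  have hp0 : p = 0 := by
    have hrad : spectralRadius ℂ p = 0 := by
      rw [spectralRadius]
      refine le_antisymm (iSup₂_le fun k hk => ?_) zero_le
      simp [show k = 0 from hspec_p hk]
    have := hp_sa.spectralRadius_eq_nnnorm
    rw [hrad] at this
    have : ‖p‖₊ = 0 := by exact_mod_cast this.symm
    simpa [nnnorm_eq_zero] using this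
  -- take the square root of `u`
  have hu_nonneg : (0 : H →L[ℂ] H) ≤ u :=
    (ContinuousLinearMap.nonneg_iff_isPositive u).mpr hu_pos
  set m : H →L[ℂ] H := CFC.sqrt u with hm_def
  have hm_nonneg : (0 : H →L[ℂ] H) ≤ m := CFC.sqrt_nonneg u
  have hm_sa : IsSelfAdjoint m := IsSelfAdjoint.of_nonneg hm_nonneg
  have hmm : m * m = u := CFC.sqrt_mul_sqrt_self u hu_nonneg
  have hmc : m * c = 0 := by
    have : star (m * c) * (m * c) = 0 := by
      rw [star_mul, hc.star_eq, hm_sa.star_eq]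
      calc c * m * (m * c) = c * (m * m) * c := by
            rw [mul_assoc, mul_assoc, mul_assoc]
        _ = p := by rw [hmm]
        _ = 0 := hp0
    exact (CStarRing.star_mul_self_eq_zero_iff _).mp this
  have huc : u * c = 0 := by
    rw [← hmm, mul_assoc, hmc, mul_zero]
  -- conclude
  ext x
  have : u (c x) = 0 := by
    have := congrArg (fun T : H →L[ℂ] H => T x) huc
    simpa using this
  have : c x ∈ LinearMap.ker (u : H →ₗ[ℂ] H) := this
  rw [hu_ker] at this
  simpa using this
end
end

section
/- Let M be a von Neumann algebra acting on a complex Hilbert space H, let u ∈ M be a positive element with trivial kernel, and let c ∈ M be self-adjoint. If uc + cu = 0, then c = 0. -/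
noncomputable section

/-- If `b` commutes with `a` and `star a`, it commutes with everything in the closed
star subalgebra generated by `a`. -/
lemma commute_of_mem_elemental {A : Type*} [CStarAlgebra A] {a b y : A}
    (hba : Commute b a) (hbs : Commute b (star a))
    (hy : y ∈ StarAlgebra.elemental ℂ a) : Commute b y := by
  induction hy using StarAlgebra.elemental.induction_on with
  | self => exact hba
  | star_self => exact hbs
  | algebraMap r => exact (Algebra.commutes r b).symm
  | add u hu v hv pu pv => exact pu.add_right pv
  | mul u hu v hv pu pv => exact pu.mul_right pv
  | closure s hs hps v hv =>
    have hcl : IsClosed {v : A | Commute b v} :=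
      isClosed_eq (continuous_mul_left b) (continuous_mul_right b)
    exact hcl.closure_subset_iff.mpr (fun u hu => hps u hu) hv

/-- If `b` commutes with a star-normal `a` and with `star a`, then it commutes with any
complex continuous functional calculus applied to `a`. -/
lemma commute_cfc_complex {A : Type*} [CStarAlgebra A] {a b : A} (ha : IsStarNormal a)
    (hba : Commute b a) (hbs : Commute b (star a)) (f : ℂ → ℂ) : Commute b (cfc f a) := by
  refine cfc_cases (fun x => Commute b x) a f (Commute.zero_right b) fun hf ha' =>
    commute_of_mem_elemental hba hbs ?_
  rw [cfcHom_eq_of_isStarNormal]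
  exact (continuousFunctionalCalculus a _).2

/-- If `b` commutes with a self-adjoint `a`, then it commutes with any real continuous
functional calculus applied to `a`. -/
lemma commute_cfc_real {A : Type*} [CStarAlgebra A] {a b : A} (ha : IsSelfAdjoint a)
    (hba : Commute b a) (f : ℝ → ℝ) : Commute b (cfc f a) := by
  rw [cfc_real_eq_complex f ha]
  exact commute_cfc_complex ha.isStarNormal hba (by rwa [ha.star_eq]) _

variable {H : Type*} [NormedAddCommGroup H] [InnerProductSpace ℂ H] [CompleteSpace H]

/-- Let `M` be a von Neumann algebra on `H`, let `u ∈ M` be positive with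
trivial kernel, and let `c ∈ M` be self-adjoint. If `uc + cu = 0`, then `c = 0`. -/
theorem eq_zero_of_anticommutes_with_positive (M : VonNeumannAlgebra H)
    (u c : H →L[ℂ] H) (huM : u ∈ M) (hcM : c ∈ M)
    (hu_pos : u.IsPositive) (hu_ker : LinearMap.ker (u : H →ₗ[ℂ] H) = ⊥)
    (hc : IsSelfAdjoint c)
    (h : u * c + c * u = 0) :
    c = 0 := by
  have hu0 : (0 : H →L[ℂ] H) ≤ u := (ContinuousLinearMap.nonneg_iff_isPositive u).mpr hu_pos
  have huc : u * c = -(c * u) := add_eq_zero_iff_eq_neg.mp h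
  -- c*c commutes with u
  have hcomm : Commute u (c * c) := by
    show u * (c * c) = (c * c) * u
    rw [← mul_assoc, huc, neg_mul, mul_assoc, huc, mul_neg, neg_neg, ← mul_assoc]
  -- the square root s of c*c
  have hb : (0 : H →L[ℂ] H) ≤ c * c := by
    simpa [hc.star_eq] using star_mul_self_nonneg c
  have hbsa : IsSelfAdjoint (c * c) := IsSelfAdjoint.of_nonneg hb
  set s : H →L[ℂ] H := cfc Real.sqrt (c * c) with hs_def
  have hs_sa : IsSelfAdjoint s := cfc_predicate Real.sqrt (c * c)
  have hss : s * s = c * c := by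
    have h1 : cfc (fun x : ℝ => Real.sqrt x * Real.sqrt x) (c * c)
        = cfc (id : ℝ → ℝ) (c * c) :=
      cfc_congr fun x hx => Real.mul_self_sqrt (spectrum_nonneg_of_nonneg hb hx)
    rw [hs_def, ← cfc_mul Real.sqrt Real.sqrt (c * c), h1, cfc_id ℝ (c * c)]
  have hus : Commute u s := commute_cfc_real hbsa hcomm Real.sqrt
  -- 0 ≤ u * (c*c)
  have hpos : (0 : H →L[ℂ] H) ≤ u * (c * c) := by
    have h2 : (0 : H →L[ℂ] H) ≤ star s * u * s := star_left_conjugate_nonneg hu0 s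
    rw [hs_sa.star_eq] at h2
    have h3 : s * u * s = u * (c * c) := by
      rw [← hus.eq, mul_assoc, hss]
    rwa [h3] at h2
  -- u * (c*c) ≤ 0
  have hneg : u * (c * c) ≤ 0 := by
    have hcucp : (0 : H →L[ℂ] H) ≤ star c * u * c := star_left_conjugate_nonneg hu0 c
    rw [hc.star_eq] at hcucp
    have h4 : u * (c * c) = -(c * u * c) := by
      rw [← mul_assoc, huc, neg_mul]
    rw [h4]
    exact neg_nonpos_of_nonneg hcucp
  have h0 : u * (c * c) = 0 := le_antisymm hneg hpos
  -- injectivity of u gives c*c = 0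
  have hcc : c * c = 0 := by
    ext x
    have hx : u ((c * c) x) = 0 := by
      have := congrArg (fun T : H →L[ℂ] H => T x) h0
      simpa using this
    have hker : (c * c) x ∈ LinearMap.ker (u : H →ₗ[ℂ] H) := hx
    rw [hu_ker] at hker
    simpa using hker
  have hstar : star c * c = 0 := by rw [hc.star_eq]; exact hcc
  exact (CStarRing.star_mul_self_eq_zero_iff c).mp hstar
end
end

section
/- Let M be a von Neumann algebra and let T : M → M be a (not necessarily linear or continuous) 2-local triple derivation. If T(x) = 0 for every self-adjoint element x ∈ M, then T = 0 on all of M. -/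
noncomputable section

variable {H : Type*} [NormedAddCommGroup H] [InnerProductSpace ℂ H] [CompleteSpace H]

lemma triple_one_one {A : Type*} [Ring A] [StarRing A] [Module ℂ A] (y : A) :
    triple (1:A) y 1 = star y := by
  simp only [triple, one_mul, mul_one]
  rw [← two_smul ℂ (star y), smul_smul]
  norm_num

/-- Every triple derivation satisfies `δ(y*) = δ(y)* + δ(1)·y* + y*·δ(1)`. -/
lemma starId {A : Type*} [Ring A] [StarRing A] [Module ℂ A]
    [SMulCommClass ℂ A A] [IsScalarTower ℂ A A]
    {δ : A →ₗ[ℂ] A} (hδ : IsTripleDerivation δ) (y : A) :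
    δ (star y) = star (δ y) + (δ 1 * star y + star y * δ 1) := by
  have h := hδ 1 y 1
  rw [triple_one_one] at h
  rw [h]
  simp only [triple, one_mul, mul_one]
  module

set_option maxHeartbeats 2000000 in
/-- For a 2-local triple derivation vanishing on selfadjoints, at any point `x` and selfadjoint
`c`, one can find a triple derivation agreeing with `T` at `x`, killing `1` and `c`. -/
lemma key_lemma (M : VonNeumannAlgebra H) (T : M → M) (hT : Is2LocalTripleDerivation T)
    (hsa : ∀ x : M, IsSelfAdjoint x → T x = 0) (x c' : M) (hc' : IsSelfAdjoint c') :
    ∃ S : M →ₗ[ℂ] M, IsTripleDerivation S ∧ S x = T x ∧ S 1 = 0 ∧ S c' = 0 := by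
  set r : ℝ := ‖(c' : H →L[ℂ] H)‖ + 1 with hr
  set lam : ℂ := (r : ℂ) with hlam
  set c : M := c' + lam • 1 with hc_def
  have hc : IsSelfAdjoint c := by
    rw [IsSelfAdjoint, hc_def, star_add, star_smul, star_one, hc'.star_eq]
    simp [hlam, Complex.conj_ofReal]
  obtain ⟨S, hS, hx1, hx2⟩ := hT x c
  have hSc : S c = 0 := by rw [← hx2, hsa c hc]
  have hstar := starId hS c
  rw [hc.star_eq, hSc, star_zero, zero_add] at hstar
  -- hstar : 0 = S 1 * c + c * S 1
  set s : M := S 1 with hs_def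
  clear_value s c lam r
  have hexp : s * c + c * s = (s * c' + c' * s) + (2 * lam) • s := by
    rw [hc_def]
    rw [mul_add, add_mul, mul_smul_comm, smul_mul_assoc, mul_one, one_mul]
    module
  have heq : (2 * lam) • s = -(s * c' + c' * s) := by
    have h0 : (s * c' + c' * s) + (2 * lam) • s = 0 := by rw [← hexp, ← hstar]
    rw [add_comm] at h0
    exact eq_neg_of_add_eq_zero_left h0
  -- push to the operator algebra and use norms
  have heq' : (2 * lam) • (s : H →L[ℂ] H) =
      -((s : H →L[ℂ] H) * (c' : H →L[ℂ] H) + (c' : H →L[ℂ] H) * (s : H →L[ℂ] H)) :=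
    congrArg Subtype.val heq
  have hr0 : (0:ℝ) ≤ ‖(c' : H →L[ℂ] H)‖ := norm_nonneg _
  have hnorm1 : ‖(2 * lam) • (s : H →L[ℂ] H)‖ = (2 * r) * ‖(s : H →L[ℂ] H)‖ := by
    rw [norm_smul]
    congr 1
    rw [hlam]
    rw [show (2 * (r:ℂ)) = ((2*r : ℝ) : ℂ) by push_cast; ring]
    rw [Complex.norm_real, Real.norm_eq_abs]
    rw [abs_of_nonneg (by rw [hr]; linarith)]
  have hnorm2 : ‖(s : H →L[ℂ] H) * (c' : H →L[ℂ] H) + (c' : H →L[ℂ] H) * (s : H →L[ℂ] H)‖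
      ≤ 2 * ‖(c' : H →L[ℂ] H)‖ * ‖(s : H →L[ℂ] H)‖ := by
    calc ‖(s : H →L[ℂ] H) * (c' : H →L[ℂ] H) + (c' : H →L[ℂ] H) * (s : H →L[ℂ] H)‖
        ≤ ‖(s : H →L[ℂ] H) * (c' : H →L[ℂ] H)‖ + ‖(c' : H →L[ℂ] H) * (s : H →L[ℂ] H)‖ :=
          norm_add_le _ _
      _ ≤ ‖(s : H →L[ℂ] H)‖ * ‖(c' : H →L[ℂ] H)‖ + ‖(c' : H →L[ℂ] H)‖ * ‖(s : H →L[ℂ] H)‖ :=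
          add_le_add (norm_mul_le _ _) (norm_mul_le _ _)
      _ = 2 * ‖(c' : H →L[ℂ] H)‖ * ‖(s : H →L[ℂ] H)‖ := by ring
  have hkey : (2 * r) * ‖(s : H →L[ℂ] H)‖ ≤ 2 * ‖(c' : H →L[ℂ] H)‖ * ‖(s : H →L[ℂ] H)‖ := by
    rw [← hnorm1, heq', norm_neg]
    exact hnorm2
  have hs_norm : ‖(s : H →L[ℂ] H)‖ = 0 := by
    have hsn : (0:ℝ) ≤ ‖(s : H →L[ℂ] H)‖ := norm_nonneg _
    nlinarith [hkey, hsn, hr0, hr]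
  have hs0 : s = 0 := Subtype.ext (norm_eq_zero.mp hs_norm)
  have hSc' : S c' = 0 := by
    rw [hc_def, map_add, map_smul, ← hs_def, hs0, smul_zero, add_zero] at hSc
    exact hSc
  refine ⟨S, hS, hx1.symm, ?_, hSc'⟩
  rw [← hs_def]
  exact hs0

set_option maxHeartbeats 2000000 in
/-- If a 2-local triple derivation on a von Neumann algebra vanishes on all
self-adjoint elements, then it vanishes identically. -/
theorem twoLocalTripleDerivation_eq_zero_of_vanishes_on_selfAdjoint (M : VonNeumannAlgebra H)
    (T : M → M) (hT : Is2LocalTripleDerivation T)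
    (hsa : ∀ x : M, IsSelfAdjoint x → T x = 0) :
    ∀ x : M, T x = 0 := by
  intro x
  set a : M := (2:ℂ)⁻¹ • (x + star x) with ha_def
  set b : M := ((2:ℂ)⁻¹ * Complex.I) • (star x - x) with hb_def
  have ha : IsSelfAdjoint a := by
    rw [IsSelfAdjoint, ha_def, star_smul, star_add, star_star]
    simp [map_ofNat, add_comm]
  have hb : IsSelfAdjoint b := by
    rw [IsSelfAdjoint, hb_def, star_smul, star_sub, star_star]
    rw [show star ((2:ℂ)⁻¹ * Complex.I) = -((2:ℂ)⁻¹ * Complex.I) by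
      simp [Complex.star_def, Complex.conj_I]]
    rw [neg_smul, ← smul_neg, neg_sub]
  have hx : a + Complex.I • b = x := by
    rw [ha_def, hb_def, smul_smul]
    rw [show Complex.I * ((2:ℂ)⁻¹ * Complex.I) = -(2:ℂ)⁻¹ by
      rw [show Complex.I * ((2:ℂ)⁻¹ * Complex.I) = (2:ℂ)⁻¹ * (Complex.I * Complex.I) from by
        ring, Complex.I_mul_I]; ring]
    module
  clear_value a b
  obtain ⟨S, hS, hSx, hS1, hSa⟩ := key_lemma M T hT hsa x a ha
  obtain ⟨S', hS', hS'x, hS'1, hS'b⟩ := key_lemma M T hT hsa x b hb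
  have hstarS : ∀ y : M, S (star y) = star (S y) := by
    intro y
    rw [starId hS y, hS1, zero_mul, mul_zero, add_zero, add_zero]
  have hstarS' : ∀ y : M, S' (star y) = star (S' y) := by
    intro y
    rw [starId hS' y, hS'1, zero_mul, mul_zero, add_zero, add_zero]
  have h1 : T x = Complex.I • S b := by
    rw [← hSx, ← hx, map_add, map_smul, hSa, zero_add]
  have h2 : star (T x) = -(T x) := by
    nth_rewrite 1 [h1]
    rw [star_smul, ← hstarS b, hb.star_eq, Complex.star_def, Complex.conj_I, neg_smul, ← h1]
  have h3 : T x = S' a := by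
    rw [← hS'x, ← hx, map_add, map_smul, hS'b, smul_zero, add_zero]
  have h4 : star (T x) = T x := by
    nth_rewrite 1 [h3]
    rw [← hstarS' a, ha.star_eq, h3]
  have h5 : T x = -(T x) := h4.symm.trans h2
  have h6 : (2:ℂ) • T x = 0 := by
    rw [two_smul]
    nth_rewrite 1 [h5]
    exact neg_add_cancel _
  have h7 : T x = (2:ℂ)⁻¹ • ((2:ℂ) • T x) := by
    rw [smul_smul]
    norm_num
  rw [h7, h6, smul_zero]
end
end
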